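/- Let X --f--> M --g--> Y --h--> X[1] be a distinguished triangle in a Hom-finite Krull-Schmidt triangulated K-category T. Then f is right minimal if and only if h lies in the Jacobson radical of T (i.e., h is a radical morphism). -/

import Mathlib

open CategoryTheory CategoryTheory.Limits CategoryTheory.Pretriangulated

universe v u

variable {C : Type u} [Category.{v} C]

/-- A morphism `f : X ⟶ M` is right minimal if any `g` with `g ≫ f = f` is an isomorphism. -/
def RightMinimal {X M : C} (f : X ⟶ M) : Prop :=
  ∀ g : X ⟶ X, g ≫ f = f → IsIso g

/-- A morphism `h : Y ⟶ Z` belongs to the Jacobson radical of the category iff for every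
`l : Z ⟶ Y` the endomorphism `𝟙 Y - h ≫ l` is invertible. -/
def IsRadicalMorphism [Preadditive C] {Y Z : C} (h : Y ⟶ Z) : Prop :=
  ∀ l : Z ⟶ Y, IsIso (𝟙 Y - h ≫ l)

/-- In a distinguished triangle `X ⟶ M ⟶ Y ⟶ X[1]` of a Hom-finite Krull-Schmidt
triangulated `K`-category, `f` is right minimal iff `h` is a radical morphism. -/
theorem rightMinimal_iff_radical
    (K : Type*) [Field K] [Preadditive C] [Linear K C] [HasZeroObject C]
    [HasShift C ℤ] [∀ n : ℤ, (shiftFunctor C n).Additive] [Pretriangulated C]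
    [∀ X Y : C, FiniteDimensional K (X ⟶ Y)] [IsIdempotentComplete C]
    {X M Y : C} (f : X ⟶ M) (g : M ⟶ Y) (h : Y ⟶ X⟦(1 : ℤ)⟧)
    (hT : Triangle.mk f g h ∈ distTriang C) :
    RightMinimal f ↔ IsRadicalMorphism h := by
  constructor
  · -- right minimal → radical
    intro hmin l
    set c : Y ⟶ Y := 𝟙 Y - h ≫ l with hc
    have hgh : g ≫ h = 0 := comp_distTriang_mor_zero₂₃ _ hT
    have hgc : g ≫ c = 𝟙 M ≫ g := by
      simp [hc, Preadditive.comp_sub, reassoc_of% hgh]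
    have hrot := rot_of_distTriang _ hT
    obtain ⟨d, hd₁, hd₂⟩ := complete_distinguished_triangle_morphism
      ((Triangle.mk f g h).rotate) ((Triangle.mk f g h).rotate) hrot hrot
      (𝟙 M) c hgc
    obtain ⟨a, ha⟩ := (shiftFunctor C (1 : ℤ)).map_surjective d
    have haf : a ≫ f = f := by
      apply (shiftFunctor C (1 : ℤ)).map_injective
      have h2 := hd₂
      rw [← ha] at h2
      dsimp [Triangle.rotate] at h2
      erw [Functor.map_comp]
      change (-(shiftFunctor C (1 : ℤ)).map f) ≫ (shiftFunctor C (1 : ℤ)).map (X := M) (Y := M) (𝟙 M) = (shiftFunctor C (1 : ℤ)).map (X := X) (Y := X) a ≫ (-(shiftFunctor C (1 : ℤ)).map f) at h2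
      change (shiftFunctor C (1 : ℤ)).map (X := X) (Y := X) a ≫ (shiftFunctor C (1 : ℤ)).map f = (shiftFunctor C (1 : ℤ)).map f
      simp only [Preadditive.comp_neg, Preadditive.neg_comp, Functor.map_id, Category.comp_id, neg_inj] at h2
      exact h2.symm.trans ((congrArg (fun t => (shiftFunctor C (1 : ℤ)).map f ≫ t) ((shiftFunctor C (1 : ℤ)).map_id M)).trans (Category.comp_id _))
    have : IsIso a := hmin a haf
    have hdiso : IsIso d := by rw [← ha]; exact Functor.map_isIso _ _
    let φ : (Triangle.mk f g h).rotate ⟶ (Triangle.mk f g h).rotate :=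
      { hom₁ := 𝟙 M
        hom₂ := c
        hom₃ := d
        comm₁ := hgc
        comm₂ := hd₁
        comm₃ := hd₂ }
    exact isIso₂_of_isIso₁₃ φ hrot hrot (by change IsIso (𝟙 M); infer_instance) hdiso
  · -- radical → right minimal
    intro hrad a haf
    obtain ⟨c, hc₁, hc₂⟩ := complete_distinguished_triangle_morphism
      (Triangle.mk f g h) (Triangle.mk f g h) hT hT a (𝟙 M)
      (by exact (Category.comp_id _).trans haf.symm)
    change Y ⟶ Y at c
    change g ≫ c = 𝟙 M ≫ g at hc₁
    have hgc : g ≫ (c - 𝟙 Y) = 0 := by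
      rw [Preadditive.comp_sub, hc₁]
      simp
    obtain ⟨l, hl⟩ := Triangle.yoneda_exact₃ _ hT (c - 𝟙 Y) hgc
    change (shiftFunctor C (1 : ℤ)).obj X ⟶ Y at l
    change c - 𝟙 Y = h ≫ l at hl
    have hciso : IsIso c := by
      have := hrad (-l)
      have hcc : 𝟙 Y - h ≫ (-l) = c := by
        rw [Preadditive.comp_neg, sub_neg_eq_add, ← hl]
        abel
      rwa [hcc] at this
    let φ : Triangle.mk f g h ⟶ Triangle.mk f g h :=
      { hom₁ := a
        hom₂ := 𝟙 M
        hom₃ := c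
        comm₁ := by exact (Category.comp_id f).trans haf.symm
        comm₂ := hc₁
        comm₃ := hc₂ }
    exact isIso₁_of_isIso₂₃ φ hT hT (by change IsIso (𝟙 M); infer_instance) hciso
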